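/- Let F be a field, σ a ring automorphism of F with σ ∘ σ = id, and δ ∈ F with δ ≠ 0 and σ(δ) = δ. If the projective centralizer PK_{δ,σ} acts transitively on the projective line ℙ¹(F), then: (a) the characteristic of F is not 2; (b) there exists x ∈ F, x ≠ 0, with δ = (x·σ(x))⁻¹; and (c) θ_{δ,σ} is conjugate to θ_{1,σ} by an inner automorphism of GL₂(F) given by an invertible diagonal matrix, i.e. there exists an invertible diagonal 2×2 matrix Y over F such that θ_{δ,σ}(Y·g·Y⁻¹) = Y·θ_{1,σ}(g)·Y⁻¹ for all g ∈ SL₂(F). -/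

import Mathlib

open Matrix

lemma flip_inv_eq {F : Type*} [Field F] {δ : F} (hδ : δ ≠ 0) :
    (!![0, 1; -δ⁻¹, 0] : Matrix (Fin 2) (Fin 2) F)⁻¹ = !![0, -δ; 1, 0] := by
  apply Matrix.inv_eq_right_inv
  rw [Matrix.mul_fin_two, Matrix.one_fin_two]
  congr 1 <;> field_simp <;> simp

lemma pk_entry {F : Type*} [Field F] (σ : F ≃+* F) (hσ : ∀ x, σ (σ x) = x)
    {δ : F} (hδ : δ ≠ 0) (g : SpecialLinearGroup (Fin 2) F)
    (hPK : !![0, 1; -δ⁻¹, 0] * (g : Matrix (Fin 2) (Fin 2) F).map σ *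
            (!![0, 1; -δ⁻¹, 0])⁻¹ = (g : Matrix (Fin 2) (Fin 2) F) ∨
         !![0, 1; -δ⁻¹, 0] * (g : Matrix (Fin 2) (Fin 2) F).map σ *
            (!![0, 1; -δ⁻¹, 0])⁻¹ = -(g : Matrix (Fin 2) (Fin 2) F)) :
    ∃ ε : F, (ε = 1 ∨ ε = -1) ∧
      ε * ((g : Matrix (Fin 2) (Fin 2) F) 0 0 * σ ((g : Matrix (Fin 2) (Fin 2) F) 0 0)
        + δ * ((g : Matrix (Fin 2) (Fin 2) F) 1 0 * σ ((g : Matrix (Fin 2) (Fin 2) F) 1 0))) = 1 := by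
  set a := (g : Matrix (Fin 2) (Fin 2) F) 0 0 with ha
  set b := (g : Matrix (Fin 2) (Fin 2) F) 0 1 with hb
  set c := (g : Matrix (Fin 2) (Fin 2) F) 1 0 with hc
  set d := (g : Matrix (Fin 2) (Fin 2) F) 1 1 with hd
  have hdet : a * d - b * c = 1 := by
    have := g.prop
    rw [Matrix.det_fin_two] at this
    exact this
  have hg : (g : Matrix (Fin 2) (Fin 2) F) = !![a, b; c, d] := Matrix.eta_fin_two _
  have hmap : (!![a, b; c, d]).map σ = !![σ a, σ b; σ c, σ d] := by
    ext i j; fin_cases i <;> fin_cases j <;> simp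
  rw [flip_inv_eq hδ, hg, hmap, Matrix.mul_fin_two, Matrix.mul_fin_two] at hPK
  rcases hPK with h | h
  · refine ⟨1, Or.inl rfl, ?_⟩
    have h01 := congrFun (congrFun h 0) 1
    have h11 := congrFun (congrFun h 1) 1
    simp at h01 h11
    have hd2 : σ a = d := by field_simp at h11; exact h11
    linear_combination hdet + a * hd2 - c * h01
  · refine ⟨-1, Or.inr rfl, ?_⟩
    have h01 := congrFun (congrFun h 0) 1
    have h11 := congrFun (congrFun h 1) 1
    simp at h01 h11
    have hd2 : σ a = -d := by field_simp at h11; exact h11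
    linear_combination hdet - a * hd2 - c * h01

/-- If the projective centralizer `PK_{δ,σ}` of the flip
`θ_{δ,σ}` acts transitively on the projective line `ℙ¹(F)`, then `char F ≠ 2`,
`δ = (x·σ(x))⁻¹` for some `x ≠ 0`, and `θ_{δ,σ}` is conjugate to `θ_{1,σ}` by
an inner automorphism of `GL₂(F)` given by an invertible diagonal matrix. -/
theorem transitive_flip_conjugate_to_standard {F : Type*} [Field F]
    (σ : F ≃+* F) (hσ : ∀ x, σ (σ x) = x)
    (δ : F) (hδ : δ ≠ 0) (hfix : σ δ = δ)
    (htrans : ∀ v w : Fin 2 → F, v ≠ 0 → w ≠ 0 →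
      ∃ g : SpecialLinearGroup (Fin 2) F,
        (!![0, 1; -δ⁻¹, 0] * (g : Matrix (Fin 2) (Fin 2) F).map σ *
            (!![0, 1; -δ⁻¹, 0])⁻¹ = (g : Matrix (Fin 2) (Fin 2) F) ∨
         !![0, 1; -δ⁻¹, 0] * (g : Matrix (Fin 2) (Fin 2) F).map σ *
            (!![0, 1; -δ⁻¹, 0])⁻¹ = -(g : Matrix (Fin 2) (Fin 2) F)) ∧
        ∃ c : F, c ≠ 0 ∧ (g : Matrix (Fin 2) (Fin 2) F).mulVec v = c • w) :
    (2 : F) ≠ 0 ∧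
    (∃ x : F, x ≠ 0 ∧ δ = (x * σ x)⁻¹) ∧
    (∃ Y : Matrix (Fin 2) (Fin 2) F, IsUnit Y.det ∧ Y 0 1 = 0 ∧ Y 1 0 = 0 ∧
      ∀ g : SpecialLinearGroup (Fin 2) F,
        !![0, 1; -δ⁻¹, 0] * ((Y * (g : Matrix (Fin 2) (Fin 2) F) * Y⁻¹).map σ) *
            (!![0, 1; -δ⁻¹, 0])⁻¹ =
          Y * (!![0, 1; -1, 0] * (g : Matrix (Fin 2) (Fin 2) F).map σ *
            (!![0, 1; -1, 0])⁻¹) * Y⁻¹) := by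
  have hv : (![1, 0] : Fin 2 → F) ≠ 0 := by intro h; simpa using congrFun h 0
  obtain ⟨g, hPK, x, hx, hmv⟩ := htrans ![1, 0] ![0, 1] hv
    (by intro h; simpa using congrFun h 1)
  have hg00 : (g : Matrix (Fin 2) (Fin 2) F) 0 0 = 0 := by
    have := congrFun hmv 0
    simpa [Matrix.mulVec, dotProduct, Fin.sum_univ_two] using this
  have hg10 : (g : Matrix (Fin 2) (Fin 2) F) 1 0 = x := by
    have := congrFun hmv 1
    simpa [Matrix.mulVec, dotProduct, Fin.sum_univ_two] using this
  obtain ⟨ε, hε, he⟩ := pk_entry σ hσ hδ g hPK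
  rw [hg00, hg10] at he
  simp only [map_zero, mul_zero, zero_mul, zero_add] at he
  -- he : ε * (δ * (x * σ x)) = 1
  obtain ⟨g', hPK', k, hk, hmv'⟩ := htrans ![1, 0] ![1, x] hv
    (by intro h; simpa using congrFun h 0)
  have hg00' : (g' : Matrix (Fin 2) (Fin 2) F) 0 0 = k := by
    have := congrFun hmv' 0
    simpa [Matrix.mulVec, dotProduct, Fin.sum_univ_two] using this
  have hg10' : (g' : Matrix (Fin 2) (Fin 2) F) 1 0 = k * x := by
    have := congrFun hmv' 1
    simpa [Matrix.mulVec, dotProduct, Fin.sum_univ_two] using this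
  obtain ⟨ε', hε', he'⟩ := pk_entry σ hσ hδ g' hPK'
  rw [hg00', hg10'] at he'
  simp only [_root_.map_mul] at he'
  -- he' : ε' * (k * σ k + δ * (k * x * (σ k * σ x))) = 1
  have hδx : δ * (x * σ x) = 1 := by
    rcases hε with h1 | h1
    · rw [h1, one_mul] at he; exact he
    · exfalso
      rw [h1] at he
      have h0 : 1 + δ * (x * σ x) = 0 := by linear_combination -he
      have : (1 : F) = 0 := by
        linear_combination -he' + ε' * k * σ k * h0
      exact one_ne_zero this
  have h2 : (2 : F) ≠ 0 := by
    intro h2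
    have : (1 : F) = 0 := by
      linear_combination -he' + ε' * k * σ k * hδx + ε' * k * σ k * h2
    exact one_ne_zero this
  refine ⟨h2, ⟨x, hx, eq_inv_of_mul_eq_one_left (by linear_combination hδx)⟩, ?_⟩
  have hσx : σ x ≠ 0 := fun h => hx (by rw [← hσ x, h, map_zero])
  set y : F := x⁻¹ with hy
  have hy0 : y ≠ 0 := inv_ne_zero hx
  have hσy : σ y ≠ 0 := fun h => hy0 (by rw [← hσ y, h, map_zero])
  have hδy : δ = y * σ y := by
    rw [hy, map_inv₀]
    field_simp
    linear_combination hδx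
  refine ⟨!![y, 0; 0, 1], ?_, by simp, by simp, ?_⟩
  · rw [Matrix.det_fin_two_of]
    simpa using isUnit_iff_ne_zero.mpr hy0
  intro g
  have hYi : (!![y, 0; 0, 1] : Matrix (Fin 2) (Fin 2) F)⁻¹ = !![y⁻¹, 0; 0, 1] :=
    Matrix.inv_eq_right_inv
      (by rw [Matrix.mul_fin_two, Matrix.one_fin_two]; congr 1 <;> field_simp <;> simp)
  have hBi : (!![0, 1; -1, 0] : Matrix (Fin 2) (Fin 2) F)⁻¹ = !![0, -1; 1, 0] :=
    Matrix.inv_eq_right_inv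
      (by rw [Matrix.mul_fin_two, Matrix.one_fin_two]; norm_num)
  rw [flip_inv_eq hδ, hYi, hBi, Matrix.eta_fin_two (g : Matrix (Fin 2) (Fin 2) F)]
  ext i j
  fin_cases i <;> fin_cases j <;>
      simp [Matrix.mul_apply, Matrix.vecMul, Matrix.vecHead, Matrix.vecTail, dotProduct, Fin.sum_univ_two, Matrix.map_apply, map_inv₀, _root_.map_mul, map_neg, hδy]
  all_goals try field_simp
  all_goals try ring
  all_goals tauto
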